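/- Let K be a field of characteristic zero and let i, j, k be integers with i, j, k ≥ 2. Then the variable polynomial X (equivalently T_1) belongs to the K-subalgebra of K[X] generated by {T_i, T_j, T_k} (Algebra.adjoin K {T_i, T_j, T_k}) if and only if gcd(i, j) = gcd(i, k) = gcd(j, k) = 1. Equivalently, the morphism (T_i, T_j, T_k) : 𝔸¹ → 𝔸³ is a closed embedding if and only if the pairwise greatest common divisor of i, j, k equals 1. -/

import Mathlib

open Polynomial Polynomial.Chebyshev



private lemma isCoprime_two_of_odd {k : ℤ} (h : Odd k) : IsCoprime (2 : ℤ) k := by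
  obtain ⟨t, ht⟩ := h
  exact ⟨-t, 1, by linarith⟩

private lemma exists_inv_cong {x m : ℤ} (r : ℤ) (h : IsCoprime x m) :
    ∃ α : ℤ, m ∣ α * x - r := by
  obtain ⟨p, q, hpq⟩ := h
  exact ⟨r * p, ⟨-r * q, by linear_combination r * hpq⟩⟩

private lemma crt_int {m n : ℤ} (a b : ℤ) (h : IsCoprime m n) :
    ∃ c : ℤ, m ∣ c - a ∧ n ∣ c - b := by
  obtain ⟨u, v, huv⟩ := h
  exact ⟨b * u * m + a * v * n, ⟨b * u - a * u, by linear_combination a * huv⟩,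
    ⟨a * v - b * v, by linear_combination b * huv⟩⟩

private lemma exists_cong {x m y n : ℤ} (r s : ℤ) (hmn : IsCoprime m n)
    (hxm : IsCoprime x m) (hyn : IsCoprime y n) :
    ∃ c : ℤ, m ∣ c * x - r ∧ n ∣ c * y - s := by
  obtain ⟨α, hα⟩ := exists_inv_cong r hxm
  obtain ⟨β, hβ⟩ := exists_inv_cong s hyn
  obtain ⟨c, hc1, hc2⟩ := crt_int α β hmn
  refine ⟨c, ?_, ?_⟩
  · have : c * x - r = (c - α) * x + (α * x - r) := by ring
    rw [this]; exact dvd_add (hc1.mul_right x) hα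
  · have : c * y - s = (c - β) * y + (β * y - s) := by ring
    rw [this]; exact dvd_add (hc2.mul_right y) hβ



section helpers

variable {K : Type*} [CommRing K]

private lemma T_mul_mem {A : Subalgebra K (Polynomial K)} {m : ℤ}
    (hm : T K m ∈ A) (c : ℤ) : T K (c * m) ∈ A := by
  rw [T_mul, comp_eq_aeval]
  exact Algebra.adjoin_le (by simpa using hm) (Polynomial.aeval_mem_adjoin_singleton K _)

private lemma T_step {A : Subalgebra K (Polynomial K)} {a b : ℤ} (ha : T K a ∈ A)
    (hb : T K b ∈ A) (hab : T K (a + b) ∈ A) : T K (a - b) ∈ A := by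
  have h : T K (a - b) = 2 * T K a * T K b - T K (a + b) := by
    linear_combination -T_mul_T K a b
  rw [h]
  have h2 : (2 : Polynomial K) ∈ A := by
    exact_mod_cast A.natCast_mem 2
  exact A.sub_mem (A.mul_mem (A.mul_mem h2 ha) hb) hab

private lemma T_mem_of_dvd {A : Subalgebra K (Polynomial K)} {g m : ℕ} (hgm : g ∣ m)
    (hg : T K (g : ℤ) ∈ A) : T K (m : ℤ) ∈ A := by
  obtain ⟨c, rfl⟩ := hgm
  have h : ((g * c : ℕ) : ℤ) = (c : ℤ) * (g : ℤ) := by push_cast; ring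
  rw [h]
  exact T_mul_mem hg c

end helpers

private lemma T_eval_half {L : Type*} [Field L] (h2 : (2 : L) ≠ 0) {z : L} (hz : z ≠ 0)
    (n : ℤ) : (T L n).eval ((z + z⁻¹) / 2) = (z ^ n + z⁻¹ ^ n) / 2 := by
  have hzi : z⁻¹ ≠ 0 := inv_ne_zero hz
  have hzz : z * z⁻¹ = 1 := mul_inv_cancel₀ hz
  induction n using Polynomial.Chebyshev.induct with
  | zero =>
    have h2t : 2 * (2 : L)⁻¹ = 1 := mul_inv_cancel₀ h2
    simp only [T_zero, eval_one, zpow_zero, div_eq_mul_inv]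
    generalize (2 : L)⁻¹ = t at h2t ⊢
    linear_combination -h2t
  | one => simp [T_one, zpow_one]
  | add_two n ih1 ih2 =>
    have r1 : ∀ w : L, w ≠ 0 → w ^ ((n : ℤ) + 1) = w ^ (n : ℤ) * w := fun w hw =>
      zpow_add_one₀ hw _
    have r2 : ∀ w : L, w ≠ 0 → w ^ ((n : ℤ) + 2) = w ^ (n : ℤ) * w * w := fun w hw => by
      rw [show ((n : ℤ) + 2) = ((n : ℤ) + 1) + 1 by ring, zpow_add_one₀ hw, zpow_add_one₀ hw]
    rw [T_add_two]
    simp only [eval_sub, eval_mul, eval_ofNat, eval_X]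
    rw [ih1, ih2, r1 z hz, r1 _ hzi, r2 z hz, r2 _ hzi]
    have h2t : 2 * (2 : L)⁻¹ = 1 := mul_inv_cancel₀ h2
    simp only [div_eq_mul_inv]
    generalize (2 : L)⁻¹ = t at h2t ⊢
    linear_combination (t * (z ^ (n : ℤ) * z * z + z⁻¹ ^ (n : ℤ) * z⁻¹ * z⁻¹) +
      t * (z ^ (n : ℤ) + z⁻¹ ^ (n : ℤ))) * h2t +
      (2 * t ^ 2 * (z ^ (n : ℤ) + z⁻¹ ^ (n : ℤ))) * hzz
  | neg_add_one n ih1 ih2 =>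
    have h := T_sub_one L (-(n : ℤ))
    rw [h]
    simp only [eval_sub, eval_mul, eval_ofNat, eval_X]
    rw [ih1, ih2, zpow_add_one₀ hz, zpow_add_one₀ hzi, zpow_sub_one₀ hz, zpow_sub_one₀ hzi,
      inv_inv]
    have h2t : 2 * (2 : L)⁻¹ = 1 := mul_inv_cancel₀ h2
    simp only [div_eq_mul_inv]
    generalize (2 : L)⁻¹ = t at h2t ⊢
    linear_combination (t * (z ^ (-(n : ℤ)) * z + z ^ (-(n : ℤ)) * z⁻¹ +
      z⁻¹ ^ (-(n : ℤ)) * z + z⁻¹ ^ (-(n : ℤ)) * z⁻¹)) * h2t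

private lemma no_two (K : Type*) [Field K] [CharZero K] (d e : ℕ) (hd : 2 ≤ d) (he : 2 ≤ e) :
    Polynomial.X ∉ Algebra.adjoin K ({T K (d : ℤ), T K (e : ℤ)} : Set (Polynomial K)) := by
  intro hX
  set L := AlgebraicClosure K with hL
  haveI : CharZero L := charZero_of_injective_algebraMap (algebraMap K L).injective
  set n : ℕ := 2 * d * e with hn
  have hn0 : n ≠ 0 := by positivity
  haveI : NeZero ((n : ℕ) : L) := ⟨Nat.cast_ne_zero.2 hn0⟩
  obtain ⟨ζ, hζ⟩ := HasEnoughRootsOfUnity.exists_primitiveRoot L n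
  have hζ0 : ζ ≠ 0 := hζ.ne_zero hn0
  have h2 : (2 : L) ≠ 0 := two_ne_zero
  set a : ℤ := (e : ℤ) + d with ha
  set b : ℤ := (e : ℤ) - d with hb
  set u : L := ζ ^ a with hu
  set v : L := ζ ^ b with hv
  have hu0 : u ≠ 0 := zpow_ne_zero _ hζ0
  have hv0 : v ≠ 0 := zpow_ne_zero _ hζ0
  set x : L := (u + u⁻¹) / 2 with hx
  set y : L := (v + v⁻¹) / 2 with hy
  -- evaluation formulas
  have evalgen : ∀ (c : ℤ) (hc0 : ζ ^ c ≠ 0) (m : ℤ),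
      (T L m).eval ((ζ ^ c + (ζ ^ c)⁻¹) / 2) = (ζ ^ (c * m) + ζ ^ (-(c * m))) / 2 := by
    intro c hc0 m
    rw [T_eval_half h2 hc0 m]
    congr 2
    · rw [zpow_mul]
    · rw [inv_zpow, ← zpow_neg, ← zpow_mul, mul_neg]
  -- agreement on generators
  have agree : ∀ m : ℤ, ζ ^ (a * m) + ζ ^ (-(a * m)) = ζ ^ (b * m) + ζ ^ (-(b * m)) →
      (Polynomial.aeval x) (T K m) = (Polynomial.aeval y) (T K m) := by
    intro m hm
    rw [aeval_T, aeval_T, hx, hy, hu, hv, evalgen a hu0 m, evalgen b hv0 m, hm]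
  have hone : ζ ^ ((n : ℤ)) = 1 := hζ.zpow_eq_one
  have hTd : (Polynomial.aeval x) (T K (d : ℤ)) = (Polynomial.aeval y) (T K (d : ℤ)) := by
    apply agree
    have key : ζ ^ (a * d) = ζ ^ (-(b * d)) := by
      rw [← mul_inv_eq_one₀ (zpow_ne_zero _ hζ0), zpow_neg, inv_inv, ← zpow_add₀ hζ0]
      rw [show a * (d : ℤ) + b * d = (n : ℤ) by rw [ha, hb, hn]; push_cast; ring]
      exact hone
    have key2 : ζ ^ (-(a * (d : ℤ))) = ζ ^ (b * (d : ℤ)) := by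
      rw [zpow_neg, key, zpow_neg, inv_inv]
    rw [key, key2]; ring
  have hTe : (Polynomial.aeval x) (T K (e : ℤ)) = (Polynomial.aeval y) (T K (e : ℤ)) := by
    apply agree
    have key : ζ ^ (a * e) = ζ ^ (b * e) := by
      rw [show a * (e : ℤ) = b * e + (n : ℤ) by rw [ha, hb, hn]; push_cast; ring,
        zpow_add₀ hζ0, hone, mul_one]
    have key2 : ζ ^ (-(a * (e : ℤ))) = ζ ^ (-(b * (e : ℤ))) := by
      rw [zpow_neg, key, ← zpow_neg]
    rw [key, key2]
  -- X is in the equalizer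
  have hle : Algebra.adjoin K ({T K (d : ℤ), T K (e : ℤ)} : Set (Polynomial K)) ≤
      AlgHom.equalizer (Polynomial.aeval x) (Polynomial.aeval (R := K) y) := by
    apply Algebra.adjoin_le
    rintro p (rfl | rfl)
    · exact hTd
    · exact hTe
  have hxy : x = y := by
    have := hle hX
    rwa [AlgHom.mem_equalizer, Polynomial.aeval_X, Polynomial.aeval_X] at this
  -- derive contradiction
  have h' : u + u⁻¹ = v + v⁻¹ := by
    have := congrArg (· * 2) hxy
    simpa [hx, hy, div_mul_cancel₀, h2] using this
  have huu : u * u⁻¹ = 1 := mul_inv_cancel₀ hu0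
  have hvv : v * v⁻¹ = 1 := mul_inv_cancel₀ hv0
  have key : (u - v) * (u - v⁻¹) = 0 := by
    linear_combination u * h' + hvv - huu
  have hd' : (2 : ℤ) ≤ d := by exact_mod_cast hd
  have he' : (2 : ℤ) ≤ e := by exact_mod_cast he
  rcases mul_eq_zero.1 key with h0 | h0
  · have huv : u = v := by linear_combination h0
    have : ζ ^ (a - b) = 1 := by
      rw [zpow_sub₀ hζ0, ← hu, ← hv, huv, div_self hv0]
    have hdvd : ((n : ℕ) : ℤ) ∣ (a - b) := (hζ.zpow_eq_one_iff_dvd _).1 this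
    have hab : a - b = 2 * d := by rw [ha, hb]; ring
    rw [hab] at hdvd
    have hpos : (0 : ℤ) < 2 * d := by linarith
    have hle' := Int.le_of_dvd hpos hdvd
    rw [hn] at hle'
    push_cast at hle'
    nlinarith
  · have huv : u = v⁻¹ := by linear_combination h0
    have : ζ ^ (a + b) = 1 := by
      rw [zpow_add₀ hζ0, ← hu, ← hv, huv, inv_mul_cancel₀ hv0]
    have hdvd : ((n : ℕ) : ℤ) ∣ (a + b) := (hζ.zpow_eq_one_iff_dvd _).1 this
    have hab : a + b = 2 * e := by rw [ha, hb]; ring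
    rw [hab] at hdvd
    have hpos : (0 : ℤ) < 2 * e := by linarith
    have hle' := Int.le_of_dvd hpos hdvd
    rw [hn] at hle'
    push_cast at hle'
    nlinarith

theorem chebyshev_triple_embedding_iff (K : Type*) [Field K] [CharZero K]
    (i j k : ℕ) (hi : 2 ≤ i) (hj : 2 ≤ j) (hk : 2 ≤ k) :
    (Polynomial.X ∈ Algebra.adjoin K ({T K i, T K j, T K k} : Set (Polynomial K))) ↔
      (Nat.gcd i j = 1 ∧ Nat.gcd i k = 1 ∧ Nat.gcd j k = 1) := by
  constructor
  · intro hX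
    -- helper for producing a contradiction from a non-coprime pair
    have main : ∀ m₁ m₂ e : ℕ, 2 ≤ e → Nat.gcd m₁ m₂ ≠ 1 → 0 < m₁ →
        T K (m₁ : ℤ) ∈ Algebra.adjoin K
          ({T K ((Nat.gcd m₁ m₂ : ℕ) : ℤ), T K (e : ℤ)} : Set (Polynomial K)) := by
      intro m₁ m₂ e _ _ _
      exact T_mem_of_dvd (Nat.gcd_dvd_left m₁ m₂) (Algebra.subset_adjoin (by simp))
    refine ⟨?_, ?_, ?_⟩
    · by_contra hgcd
      have hg2 : 2 ≤ Nat.gcd i j := by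
        have h0 : 0 < Nat.gcd i j := Nat.gcd_pos_of_pos_left j (by omega)
        omega
      apply no_two K (Nat.gcd i j) k hg2 hk
      refine Algebra.adjoin_le ?_ hX
      rintro p (rfl | rfl | rfl)
      · exact T_mem_of_dvd (Nat.gcd_dvd_left i j) (Algebra.subset_adjoin (by simp))
      · exact T_mem_of_dvd (Nat.gcd_dvd_right i j) (Algebra.subset_adjoin (by simp))
      · exact Algebra.subset_adjoin (by simp)
    · by_contra hgcd
      have hg2 : 2 ≤ Nat.gcd i k := by
        have h0 : 0 < Nat.gcd i k := Nat.gcd_pos_of_pos_left k (by omega)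
        omega
      apply no_two K (Nat.gcd i k) j hg2 hj
      refine Algebra.adjoin_le ?_ hX
      rintro p (rfl | rfl | rfl)
      · exact T_mem_of_dvd (Nat.gcd_dvd_left i k) (Algebra.subset_adjoin (by simp))
      · exact Algebra.subset_adjoin (by simp)
      · exact T_mem_of_dvd (Nat.gcd_dvd_right i k) (Algebra.subset_adjoin (by simp))
    · by_contra hgcd
      have hg2 : 2 ≤ Nat.gcd j k := by
        have h0 : 0 < Nat.gcd j k := Nat.gcd_pos_of_pos_left k (by omega)
        omega
      apply no_two K (Nat.gcd j k) i hg2 hi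
      refine Algebra.adjoin_le ?_ hX
      rintro p (rfl | rfl | rfl)
      · exact Algebra.subset_adjoin (by simp)
      · exact T_mem_of_dvd (Nat.gcd_dvd_left j k) (Algebra.subset_adjoin (by simp))
      · exact T_mem_of_dvd (Nat.gcd_dvd_right j k) (Algebra.subset_adjoin (by simp))
  · rintro ⟨hij, hik, hjk⟩
    set A := Algebra.adjoin K ({T K i, T K j, T K k} : Set (Polynomial K)) with hA
    show Polynomial.X ∈ A
    have hTi : T K (i : ℤ) ∈ A := Algebra.subset_adjoin (by simp)
    have hTj : T K (j : ℤ) ∈ A := Algebra.subset_adjoin (by simp)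
    have hTk : T K (k : ℤ) ∈ A := Algebra.subset_adjoin (by simp)
    have mi : ∀ c : ℤ, T K (c * i) ∈ A := fun c => T_mul_mem hTi c
    have mj : ∀ c : ℤ, T K (c * j) ∈ A := fun c => T_mul_mem hTj c
    have mk : ∀ c : ℤ, T K (c * k) ∈ A := fun c => T_mul_mem hTk c
    have cij : IsCoprime (i : ℤ) (j : ℤ) := Int.isCoprime_iff_gcd_eq_one.2 (by
      rwa [Int.gcd_natCast_natCast])
    have cik : IsCoprime (i : ℤ) (k : ℤ) := Int.isCoprime_iff_gcd_eq_one.2 (by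
      rwa [Int.gcd_natCast_natCast])
    have cjk : IsCoprime (j : ℤ) (k : ℤ) := Int.isCoprime_iff_gcd_eq_one.2 (by
      rwa [Int.gcd_natCast_natCast])
    suffices h1 : T K (1 : ℤ) ∈ A by simpa [T_one] using h1
    rcases Nat.even_or_odd k with hke | hko
    · -- k even, so i and j are odd
      obtain ⟨k', hk'⟩ := hke
      have hk2 : (k : ℤ) = 2 * k' := by push_cast [hk']; ring
      have hio : Odd i := by
        rcases Nat.even_or_odd i with hie | hio
        · exfalso
          have : 2 ∣ Nat.gcd i k := Nat.dvd_gcd hie.two_dvd (by omega)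
          omega
        · exact hio
      have hjo : Odd j := by
        rcases Nat.even_or_odd j with hje | hjo
        · exfalso
          have : 2 ∣ Nat.gcd j k := Nat.dvd_gcd hje.two_dvd (by omega)
          omega
        · exact hjo
      have hdk' : (k' : ℤ) ∣ (k : ℤ) := ⟨2, by rw [hk2]; ring⟩
      have cjk' : IsCoprime (j : ℤ) (k' : ℤ) := cjk.of_isCoprime_of_dvd_right hdk'
      have cik' : IsCoprime (i : ℤ) (k' : ℤ) := cik.of_isCoprime_of_dvd_right hdk'
      -- Step 1: get T 2 ∈ A
      obtain ⟨c₁, h11, h12⟩ := exists_cong (x := (i:ℤ)) (m := (j:ℤ)) (y := (i:ℤ))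
        (n := (k':ℤ)) 2 1 cjk' cij cik'
      obtain ⟨d₁, hd₁⟩ := h11
      obtain ⟨e₁, he₁⟩ := h12
      have hsum : T K (c₁ * (i:ℤ) + d₁ * (j:ℤ)) ∈ A := by
        rw [show c₁ * (i:ℤ) + d₁ * (j:ℤ) = e₁ * (k:ℤ) by
          rw [hk2]; linear_combination -hd₁ + 2 * he₁]
        exact mk e₁
      have h2A : T K (2 : ℤ) ∈ A := by
        have := T_step (mi c₁) (mj d₁) hsum
        rwa [show c₁ * (i:ℤ) - d₁ * (j:ℤ) = 2 by linear_combination hd₁] at this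
      have m2 : ∀ c : ℤ, T K (c * 2) ∈ A := fun c => T_mul_mem h2A c
      -- Step 2: find odd c₂ with 2*c₂*i ≡ 1 mod j
      have c2j : IsCoprime (2 : ℤ) (j : ℤ) := isCoprime_two_of_odd (by
        exact_mod_cast hjo)
      obtain ⟨c₂, h31, h32⟩ := exists_cong (x := (1:ℤ)) (m := (2:ℤ)) (y := (2 * i : ℤ))
        (n := (j:ℤ)) 1 1 c2j (isCoprime_one_left) (c2j.mul_left cij)
      obtain ⟨t, ht⟩ := h31
      obtain ⟨g, hg⟩ := h32
      obtain ⟨si, hsi⟩ := hio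
      have hsi' : (i : ℤ) = 2 * si + 1 := by push_cast [hsi]; ring
      -- b := c₂ * i - 1 is even
      have hbev : c₂ * (i:ℤ) - 1 = (2 * t * si + t + si) * 2 := by
        rw [hsi']; linear_combination ((2:ℤ) * si + 1) * ht
      have hbA : T K (c₂ * (i:ℤ) - 1) ∈ A := by
        rw [hbev]; exact m2 _
      have hsum2 : T K (c₂ * (i:ℤ) + (c₂ * (i:ℤ) - 1)) ∈ A := by
        rw [show c₂ * (i:ℤ) + (c₂ * (i:ℤ) - 1) = g * (j:ℤ) by linear_combination hg]
        exact mj g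
      have := T_step (mi c₂) hbA hsum2
      rwa [show c₂ * (i:ℤ) - (c₂ * (i:ℤ) - 1) = 1 by ring] at this
    · -- k odd
      have c2k : IsCoprime (2 : ℤ) (k : ℤ) := isCoprime_two_of_odd (by exact_mod_cast hko)
      obtain ⟨c, hc1, hc2⟩ := exists_cong (x := (i:ℤ)) (m := (j:ℤ)) (y := (2 * i : ℤ))
        (n := (k:ℤ)) 1 1 cjk cij ((c2k).mul_left cik)
      obtain ⟨d, hd⟩ := hc1
      obtain ⟨f, hf⟩ := hc2
      have hsum : T K (c * (i:ℤ) + d * (j:ℤ)) ∈ A := by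
        rw [show c * (i:ℤ) + d * (j:ℤ) = f * (k:ℤ) by linear_combination -hd + hf]
        exact mk f
      have := T_step (mi c) (mj d) hsum
      rwa [show c * (i:ℤ) - d * (j:ℤ) = 1 by linear_combination hd] at this
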